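/- Every (2p+1)-dimensional complex Lie algebra carrying a contact form contracts onto the Heisenberg algebra h_{2p+1}: let μ be a Lie bracket on ℂ^{2p+1} and suppose there is a basis (X₁, X₂, …, X_{2p+1}) such that, writing μ(X_i, X_j) = Σ_k C_{ij}^k X_k, one has C_{2,3}^1 = C_{4,5}^1 = ⋯ = C_{2p,2p+1}^1 = 1 and C_{ij}^1 = 0 for all other pairs i < j (the normal form of a contact form). Define f_ε ∈ GL(ℂ^{2p+1}) by f_ε(X₁) = ε²X₁ and f_ε(X_i) = εX_i for i ≥ 2. Then as ε → 0 the brackets (f_ε * μ)(X,Y) = f_ε⁻¹(μ(f_ε(X), f_ε(Y))) converge, in the space of bilinear maps, to the bracket μ₀ determined by μ₀(X_{2i}, X_{2i+1}) = X₁ for i = 1,…,p and μ₀(X_i, X_j) = 0 for all other pairs of basis vectors, which is (isomorphic to) the Heisenberg Lie bracket of dimension 2p+1. -/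

import Mathlib

open Filter Topology

/-- The standard basis vector `e i` of `ℂ^m`. -/
noncomputable def stdBasisVec (m : ℕ) (i : Fin m) : Fin m → ℂ := Pi.single i 1

/-- The contraction isomorphism `f_ε`: `f_ε(X₁) = ε² X₁`, `f_ε(X_i) = ε X_i` for `i ≥ 2`
(indices written 0-based, so `X₁` is coordinate `0`). -/
noncomputable def contactScale (p : ℕ) (ε : ℂ) (x : Fin (2 * p + 1) → ℂ) :
    Fin (2 * p + 1) → ℂ :=
  fun j => if j = 0 then ε ^ 2 * x j else ε * x j

/-- The inverse `f_ε⁻¹` of the contraction isomorphism. -/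
noncomputable def contactScaleInv (p : ℕ) (ε : ℂ) (x : Fin (2 * p + 1) → ℂ) :
    Fin (2 * p + 1) → ℂ :=
  fun j => if j = 0 then (ε ^ 2)⁻¹ * x j else ε⁻¹ * x j

/-- The Heisenberg Lie bracket `μ₀` on `ℂ^{2p+1}`, determined (by bilinearity) by
`μ₀(X_{2i}, X_{2i+1}) = X₁` for `i = 1,…,p` and `μ₀(X_i, X_j) = 0` for all other pairs of
basis vectors (0-based: `μ₀(e_{2i+1}, e_{2i+2}) = e₀`). -/
noncomputable def heisenbergBracket (p : ℕ) (X Y : Fin (2 * p + 1) → ℂ) :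
    Fin (2 * p + 1) → ℂ :=
  fun k => if k = 0 then
    ∑ i : Fin p,
      (X ⟨2 * i.1 + 1, by have := i.2; omega⟩ * Y ⟨2 * i.1 + 2, by have := i.2; omega⟩ -
       X ⟨2 * i.1 + 2, by have := i.2; omega⟩ * Y ⟨2 * i.1 + 1, by have := i.2; omega⟩)
  else 0

def av (p : ℕ) (t : Fin p) : Fin (2 * p + 1) := ⟨2 * t.1 + 1, by have := t.2; omega⟩
def bv (p : ℕ) (t : Fin p) : Fin (2 * p + 1) := ⟨2 * t.1 + 2, by have := t.2; omega⟩

noncomputable def Dm (p : ℕ) (i j : Fin (2 * p + 1)) : ℂ :=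
  ∑ t : Fin p, ((if i = av p t ∧ j = bv p t then (1:ℂ) else 0) -
    (if i = bv p t ∧ j = av p t then (1:ℂ) else 0))

lemma Dm_antisymm (p : ℕ) (i j : Fin (2 * p + 1)) : Dm p i j = - Dm p j i := by
  unfold Dm
  rw [← Finset.sum_neg_distrib]
  apply Finset.sum_congr rfl
  intro t _
  have h1 : (if i = av p t ∧ j = bv p t then (1:ℂ) else 0) =
      (if j = bv p t ∧ i = av p t then (1:ℂ) else 0) := if_congr and_comm rfl rfl
  have h2 : (if i = bv p t ∧ j = av p t then (1:ℂ) else 0) =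
      (if j = av p t ∧ i = bv p t then (1:ℂ) else 0) := if_congr and_comm rfl rfl
  rw [h1, h2]; ring

lemma Dm_lt (p : ℕ) (i j : Fin (2 * p + 1)) (hij : i < j) :
    Dm p i j = if i.1 % 2 = 1 ∧ j.1 = i.1 + 1 then 1 else 0 := by
  unfold Dm
  split_ifs with hc
  · set t₀ : Fin p := ⟨i.1 / 2, by have := j.2; omega⟩ with ht₀
    rw [Finset.sum_eq_single t₀]
    · have h1 : i = av p t₀ := by simp [av, Fin.ext_iff, ht₀]; omega
      have h2 : j = bv p t₀ := by simp [bv, Fin.ext_iff, ht₀]; omega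
      have h3 : ¬ (i = bv p t₀ ∧ j = av p t₀) := by
        rintro ⟨h, -⟩; rw [Fin.ext_iff] at h; simp [bv] at h; omega
      rw [if_pos ⟨h1, h2⟩, if_neg h3]; ring
    · intro t _ ht
      have h1 : ¬ (i = av p t ∧ j = bv p t) := by
        rintro ⟨h, -⟩; rw [Fin.ext_iff] at h; simp [av] at h
        apply ht; rw [Fin.ext_iff]; simp [ht₀]; omega
      have h2 : ¬ (i = bv p t ∧ j = av p t) := by
        rintro ⟨h, -⟩; rw [Fin.ext_iff] at h; simp [bv] at h; omega
      rw [if_neg h1, if_neg h2]; ring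
    · simp
  · apply Finset.sum_eq_zero
    intro t _
    have h1 : ¬ (i = av p t ∧ j = bv p t) := by
      rintro ⟨h, h'⟩; rw [Fin.ext_iff] at h h'; simp [av, bv] at h h'
      exact hc ⟨by omega, by omega⟩
    have h2 : ¬ (i = bv p t ∧ j = av p t) := by
      rintro ⟨h, h'⟩; rw [Fin.ext_iff] at h h'; simp [av, bv] at h h'
      rw [Fin.lt_iff_val_lt_val] at hij; omega
    rw [if_neg h1, if_neg h2]; ring

lemma Dm_left0 (p : ℕ) (j : Fin (2 * p + 1)) : Dm p 0 j = 0 := by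
  apply Finset.sum_eq_zero
  intro t _
  have h1 : ¬ ((0 : Fin (2*p+1)) = av p t ∧ j = bv p t) := by
    rintro ⟨h, -⟩; rw [Fin.ext_iff] at h; simp [av] at h
  have h2 : ¬ ((0 : Fin (2*p+1)) = bv p t ∧ j = av p t) := by
    rintro ⟨h, -⟩; rw [Fin.ext_iff] at h; simp [bv] at h
  rw [if_neg h1, if_neg h2]; ring

lemma Dm_right0 (p : ℕ) (i : Fin (2 * p + 1)) : Dm p i 0 = 0 := by
  rw [Dm_antisymm, Dm_left0]; ring

lemma sum_Dm (p : ℕ) (X Y : Fin (2 * p + 1) → ℂ) :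
    ∑ i, ∑ j, X i * Y j * Dm p i j =
      ∑ t : Fin p, (X (av p t) * Y (bv p t) - X (bv p t) * Y (av p t)) := by
  unfold Dm
  simp only [Finset.mul_sum]
  conv_lhs => enter [2, i]; rw [Finset.sum_comm]
  rw [Finset.sum_comm]
  apply Finset.sum_congr rfl
  intro t _
  rw [Finset.sum_comm]
  simp [mul_sub, ite_and, mul_ite, mul_one, mul_zero, Finset.sum_sub_distrib,
    Finset.sum_ite_eq', Finset.sum_ite_eq]

lemma Ckey (p : ℕ) (μ : (Fin (2 * p + 1) → ℂ) → (Fin (2 * p + 1) → ℂ) → (Fin (2 * p + 1) → ℂ))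
    (hskew : ∀ X Y, μ X Y = - μ Y X)
    (hcontact : ∀ i j : Fin (2 * p + 1), i < j →
      μ (stdBasisVec (2 * p + 1) i) (stdBasisVec (2 * p + 1) j) 0 =
        if i.1 % 2 = 1 ∧ j.1 = i.1 + 1 then 1 else 0) :
    ∀ i j, μ (stdBasisVec (2 * p + 1) i) (stdBasisVec (2 * p + 1) j) 0 = Dm p i j := by
  have hlt : ∀ i j, i < j →
      μ (stdBasisVec (2 * p + 1) i) (stdBasisVec (2 * p + 1) j) 0 = Dm p i j := by
    intro i j h; rw [hcontact i j h, Dm_lt p i j h]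
  intro i j
  rcases lt_trichotomy i j with h | h | h
  · exact hlt i j h
  · subst h
    have hs := congrFun (hskew (stdBasisVec (2 * p + 1) i) (stdBasisVec (2 * p + 1) i)) 0
    rw [Pi.neg_apply] at hs
    have hl : μ (stdBasisVec (2 * p + 1) i) (stdBasisVec (2 * p + 1) i) 0 = 0 := by
      linear_combination hs / 2
    rw [hl]; symm
    apply Finset.sum_eq_zero
    intro t _
    have h1 : ¬ (i = av p t ∧ i = bv p t) := by
      rintro ⟨h1, h2⟩; rw [h1] at h2; rw [Fin.ext_iff] at h2; simp [av, bv] at h2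
    have h2 : ¬ (i = bv p t ∧ i = av p t) := fun ⟨ha, hb⟩ => h1 ⟨hb, ha⟩
    rw [if_neg h1, if_neg h2]; ring
  · rw [hskew, Pi.neg_apply, hlt j i h, Dm_antisymm p i j]

lemma expandBil (p : ℕ)
    (μ : (Fin (2 * p + 1) → ℂ) → (Fin (2 * p + 1) → ℂ) → (Fin (2 * p + 1) → ℂ))
    (hadd₁ : ∀ X X' Y, μ (X + X') Y = μ X Y + μ X' Y)
    (hsmul₁ : ∀ (c : ℂ) X Y, μ (c • X) Y = c • μ X Y)
    (hadd₂ : ∀ X Y Y', μ X (Y + Y') = μ X Y + μ X Y')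
    (hsmul₂ : ∀ (c : ℂ) X Y, μ X (c • Y) = c • μ X Y)
    (X Y : Fin (2 * p + 1) → ℂ) :
    μ X Y = ∑ i, ∑ j, (X i * Y j) •
      μ (stdBasisVec (2 * p + 1) i) (stdBasisVec (2 * p + 1) j) := by
  classical
  have hzero₁ : ∀ Y, μ 0 Y = 0 := by
    intro Y
    have := hsmul₁ 0 0 Y
    simpa using this
  have hzero₂ : ∀ X, μ X 0 = 0 := by
    intro X
    have := hsmul₂ 0 X 0
    simpa using this
  have hsum₁ : ∀ {ι : Type} (s : Finset ι) (g : ι → (Fin (2 * p + 1) → ℂ)) Y,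
      μ (∑ i ∈ s, g i) Y = ∑ i ∈ s, μ (g i) Y := by
    intro ι s g Y
    induction s using Finset.induction_on with
    | empty => simpa using hzero₁ Y
    | insert _ _ hx ih => rw [Finset.sum_insert hx, hadd₁, ih, Finset.sum_insert hx]
  have hsum₂ : ∀ {ι : Type} (s : Finset ι) (g : ι → (Fin (2 * p + 1) → ℂ)) X,
      μ X (∑ i ∈ s, g i) = ∑ i ∈ s, μ X (g i) := by
    intro ι s g X
    induction s using Finset.induction_on with
    | empty => simpa using hzero₂ X
    | insert _ _ hx ih => rw [Finset.sum_insert hx, hadd₂, ih, Finset.sum_insert hx]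
  have hX : X = ∑ i, X i • stdBasisVec (2 * p + 1) i := by
    funext r
    simp [stdBasisVec, Finset.sum_apply, Pi.single_apply, Finset.sum_ite_eq]
  have hY : Y = ∑ j, Y j • stdBasisVec (2 * p + 1) j := by
    funext r
    simp [stdBasisVec, Finset.sum_apply, Pi.single_apply, Finset.sum_ite_eq]
  conv_lhs => rw [hX, hY]
  rw [hsum₁]
  apply Finset.sum_congr rfl
  intro i _
  rw [hsmul₁, hsum₂, Finset.smul_sum]
  apply Finset.sum_congr rfl
  intro j _
  rw [hsmul₂, smul_smul]

theorem contact_lie_algebra_contracts_to_heisenberg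
    (p : ℕ) (μ : (Fin (2 * p + 1) → ℂ) → (Fin (2 * p + 1) → ℂ) → (Fin (2 * p + 1) → ℂ))
    (hadd₁ : ∀ X X' Y, μ (X + X') Y = μ X Y + μ X' Y)
    (hsmul₁ : ∀ (c : ℂ) X Y, μ (c • X) Y = c • μ X Y)
    (hadd₂ : ∀ X Y Y', μ X (Y + Y') = μ X Y + μ X Y')
    (hsmul₂ : ∀ (c : ℂ) X Y, μ X (c • Y) = c • μ X Y)
    (hskew : ∀ X Y, μ X Y = - μ Y X)
    (hjac : ∀ X Y Z, μ X (μ Y Z) + μ Y (μ Z X) + μ Z (μ X Y) = 0)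
    (hcontact : ∀ i j : Fin (2 * p + 1), i < j →
      μ (stdBasisVec (2 * p + 1) i) (stdBasisVec (2 * p + 1) j) 0 =
        if i.1 % 2 = 1 ∧ j.1 = i.1 + 1 then 1 else 0) :
    (∀ ε : ℂ, ε ≠ 0 → ∀ x, contactScaleInv p ε (contactScale p ε x) = x) ∧
    (∀ i : Fin p,
      heisenbergBracket p (stdBasisVec (2 * p + 1) ⟨2 * i.1 + 1, by have := i.2; omega⟩)
        (stdBasisVec (2 * p + 1) ⟨2 * i.1 + 2, by have := i.2; omega⟩) =
      stdBasisVec (2 * p + 1) 0) ∧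
    Tendsto
      (fun ε : ℂ => fun X Y => contactScaleInv p ε (μ (contactScale p ε X) (contactScale p ε Y)))
      (𝓝[≠] (0 : ℂ)) (𝓝 (heisenbergBracket p)) := by
  refine ⟨?_, ?_, ?_⟩
  · intro ε hε x
    funext j
    simp only [contactScale, contactScaleInv]
    split_ifs with h <;> field_simp
  · intro t
    funext k
    unfold heisenbergBracket stdBasisVec
    by_cases hk : k = 0
    · subst hk
      rw [if_pos rfl, Pi.single_eq_same, Finset.sum_eq_single t]
      · have h1 : Pi.single (M := fun _ => ℂ)
            (⟨2 * t.1 + 1, by have := t.2; omega⟩ : Fin (2*p+1)) 1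
            ⟨2 * t.1 + 2, by have := t.2; omega⟩ = 0 := by
          apply Pi.single_eq_of_ne; simp [Fin.ext_iff]
        have h2 : Pi.single (M := fun _ => ℂ)
            (⟨2 * t.1 + 2, by have := t.2; omega⟩ : Fin (2*p+1)) 1
            ⟨2 * t.1 + 1, by have := t.2; omega⟩ = 0 := by
          apply Pi.single_eq_of_ne; simp [Fin.ext_iff]
        rw [Pi.single_eq_same, Pi.single_eq_same, h1, h2]; ring
      · intro b _ hb
        have hbt : b.1 ≠ t.1 := fun h => hb (Fin.ext h)
        simp only [Pi.single_apply, Fin.mk.injEq]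
        split_ifs <;> first | (exfalso; omega) | ring
      · simp
    · rw [if_neg hk, Pi.single_eq_of_ne hk]
  · rw [tendsto_pi_nhds]; intro X
    rw [tendsto_pi_nhds]; intro Y
    rw [tendsto_pi_nhds]; intro k
    set F : ℂ → ℂ := fun ε => ∑ i : Fin (2*p+1), ∑ j : Fin (2*p+1),
      ε ^ ((if i = 0 then 1 else 0) + (if j = 0 then 1 else 0) + (if k = 0 then 0 else 1)) *
        (X i * Y j * μ (stdBasisVec (2*p+1) i) (stdBasisVec (2*p+1) j) k) with hF
    have hev : ∀ ε : ℂ, ε ≠ 0 →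
        contactScaleInv p ε (μ (contactScale p ε X) (contactScale p ε Y)) k = F ε := by
      intro ε hε
      rw [expandBil p μ hadd₁ hsmul₁ hadd₂ hsmul₂]
      simp only [contactScaleInv, Finset.sum_apply, Pi.smul_apply, smul_eq_mul, Finset.mul_sum,
        hF]
      split_ifs with hk
      all_goals
        refine Finset.sum_congr rfl fun i _ => Finset.sum_congr rfl fun j _ => ?_
      all_goals
        simp only [contactScale, hk, if_pos, if_neg]
      all_goals
        split_ifs <;> first | (exfalso; tauto) | (field_simp; ring)
    have hFc : Continuous F := by
      apply continuous_finset_sum; intro i _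
      apply continuous_finset_sum; intro j _
      exact (continuous_pow _).mul continuous_const
    have hF0 : F 0 = heisenbergBracket p X Y k := by
      by_cases hk : k = 0
      · subst hk
        have hterm : ∀ i j : Fin (2*p+1),
            (0:ℂ) ^ ((if i = 0 then 1 else 0) + (if j = 0 then 1 else 0) +
              (if (0 : Fin (2*p+1)) = 0 then 0 else 1)) *
              (X i * Y j * μ (stdBasisVec (2*p+1) i) (stdBasisVec (2*p+1) j) 0) =
            X i * Y j * Dm p i j := by
          intro i j
          rw [Ckey p μ hskew hcontact i j]
          by_cases hi : i = 0
          · subst hi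
            rw [Dm_left0]
            rw [zero_pow (by simp)]
            ring
          · by_cases hj : j = 0
            · subst hj
              rw [Dm_right0]
              rw [zero_pow (by simp [hi])]
              ring
            · rw [if_neg hi, if_neg hj, if_pos rfl, pow_zero, one_mul]
        rw [hF]
        beta_reduce
        rw [Finset.sum_congr rfl fun i _ => Finset.sum_congr rfl fun j _ => hterm i j, sum_Dm]
        simp [heisenbergBracket, av, bv]
      · simp only [hF]
        have hterm : ∀ i j : Fin (2*p+1),
            (0:ℂ) ^ ((if i = 0 then 1 else 0) + (if j = 0 then 1 else 0) +
              (if k = 0 then 0 else 1)) *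
              (X i * Y j * μ (stdBasisVec (2*p+1) i) (stdBasisVec (2*p+1) j) k) = 0 := by
          intro i j
          rw [if_neg hk, zero_pow (by omega)]
          ring
        rw [Finset.sum_congr rfl fun i _ => Finset.sum_congr rfl fun j _ => hterm i j]
        simp [heisenbergBracket, hk]
    have htend : Tendsto F (𝓝[≠] (0:ℂ)) (𝓝 (heisenbergBracket p X Y k)) := by
      rw [← hF0]
      exact (hFc.tendsto 0).mono_left nhdsWithin_le_nhds
    refine htend.congr' ?_
    filter_upwards [self_mem_nhdsWithin] with ε hε
    exact (hev ε hε).symm
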